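/- arXiv:2009.01314 — 2 statements merged into one kernel-verified Lean document; each statement's English description precedes it below -/
import Mathlib

section
/- Assume f \in C^1([0,\infty)) satisfies f(0)=0 and there is c_0 > 0 with -f(s) < c_0 s^{p-1} for all sufficiently small s > 0. If u is a positive solution of the one-dimensional problem (1) for some \lambda > 0, then u'(1) < 0. -/
open Set

/-- `φ_p(t) = t |t|^{p-2}` (real exponent), with `φ_p(0)=0`. -/
noncomputable def phi (p t : ℝ) : ℝ := t * |t| ^ (p - 2)

/-- `φ_p'(t) = (p-1) |t|^{p-2}`. -/
noncomputable def phi' (p t : ℝ) : ℝ := (p - 1) * |t| ^ (p - 2)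

/-- The derivative of a function on `[-1,1]` (one-sided at the endpoints). -/
noncomputable def du (u : ℝ → ℝ) : ℝ → ℝ := derivWithin u (Set.Icc (-1) 1)

/-- A positive (classical) solution of the one-dimensional problem (1):
`(φ_p(u'))' + λ f(u) = 0` on `(-1,1)`, `u(-1) = u(1) = 0`,
with `u ∈ C^1[-1,1]`, `φ_p ∘ u' ∈ C^1((-1,1))`, and `u > 0` on `(-1,1)`. -/
structure Sol1D (p lam : ℝ) (f : ℝ → ℝ) (u : ℝ → ℝ) : Prop where
  reg : ContDiffOn ℝ 1 u (Set.Icc (-1) 1)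
  reg' : ContDiffOn ℝ 1 (fun x => phi p (du u x)) (Set.Ioo (-1) 1)
  pos : ∀ x ∈ Set.Ioo (-1:ℝ) 1, 0 < u x
  bcm : u (-1) = 0
  bc1 : u 1 = 0
  ode : ∀ x ∈ Set.Ioo (-1:ℝ) 1,
    deriv (fun y => phi p (du u y)) x + lam * f (u x) = 0

/-- A solution of the linearized problem (4) at `u`:
`(φ_p'(u') w')' + λ f'(u) w = 0` on `(-1,1)`, `w(-1) = w(1) = 0`. -/
structure Lin1D (p lam : ℝ) (f : ℝ → ℝ) (u w : ℝ → ℝ) : Prop where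
  reg : ContDiffOn ℝ 1 w (Set.Icc (-1) 1)
  reg' : ContDiffOn ℝ 1 (fun x => phi' p (du u x) * du w x) (Set.Ioo (-1) 1)
  ode : ∀ x ∈ Set.Ioo (-1:ℝ) 1,
    deriv (fun y => phi' p (du u y) * du w y) x + lam * deriv f (u x) * w x = 0
  bcm : w (-1) = 0
  bc1 : w 1 = 0

namespace Stmt11Aux

lemma abs_phi {p : ℝ} (hp : 1 < p) (t : ℝ) : |phi p t| = |t| ^ (p - 1) := by
  rcases eq_or_ne t 0 with rfl | ht
  · simp [phi, Real.zero_rpow (by linarith : p - 1 ≠ 0)]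
  · rw [phi, abs_mul, abs_of_nonneg (Real.rpow_nonneg (abs_nonneg t) _),
      show p - 1 = 1 + (p - 2) by ring, Real.rpow_add (abs_pos.mpr ht), Real.rpow_one]

/-- `φ_{p'} ∘ φ_p = id` where `p' = p/(p-1)`. -/
lemma phi_inv {p : ℝ} (hp : 1 < p) (t : ℝ) :
    |phi p t| ^ (p / (p - 1) - 2) * phi p t = t := by
  have hne : p - 1 ≠ 0 := by linarith
  rcases eq_or_ne t 0 with rfl | ht
  · simp [phi]
  · rw [abs_phi hp, ← Real.rpow_mul (abs_nonneg t), phi, mul_left_comm,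
      ← Real.rpow_add (abs_pos.mpr ht)]
    have h1 : (p - 1) * (p / (p - 1) - 2) + (p - 2) = 0 := by
      field_simp; ring
    rw [h1, Real.rpow_zero, mul_one]

lemma abs_phi_rpow {p : ℝ} (hp : 1 < p) (t : ℝ) :
    |phi p t| ^ (p / (p - 1)) = |t| ^ p := by
  have hne : p - 1 ≠ 0 := by linarith
  rw [abs_phi hp, ← Real.rpow_mul (abs_nonneg t)]
  congr 1
  rw [mul_comm, div_mul_cancel₀ _ hne]

lemma continuous_abs_rpow {q : ℝ} (hq : 0 ≤ q) : Continuous (fun t : ℝ => |t| ^ q) :=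
  continuous_iff_continuousAt.2 fun _ =>
    (Real.continuousAt_rpow_const _ _ (Or.inr hq)).comp continuous_abs.continuousAt

lemma continuous_phi {p : ℝ} (hp : 1 < p) : Continuous (phi p) := by
  rw [continuous_iff_continuousAt]
  intro v
  rcases eq_or_ne v 0 with rfl | hv
  · rw [ContinuousAt, phi]
    simp only [abs_zero, Real.zero_rpow, zero_mul]
    apply squeeze_zero_norm (a := fun t => |t| ^ (p-1))
    · intro t
      rw [Real.norm_eq_abs, ← abs_phi hp t]
    · have : ContinuousAt (fun t : ℝ => |t| ^ (p-1)) 0 :=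
        (continuous_abs_rpow (by linarith)).continuousAt
      simpa [Real.zero_rpow (by linarith : p - 1 ≠ 0)] using this.tendsto
  · apply ContinuousAt.mul continuousAt_id
    exact (Real.continuousAt_rpow_const _ _ (Or.inl (abs_ne_zero.mpr hv))).comp
      continuous_abs.continuousAt

end Stmt11Aux

open Stmt11Aux Filter Topology MeasureTheory

/-- Lemma 3.1 (Hopf's lemma in the one-dimensional case): `u'(1) < 0`. -/
theorem stmt11 (p : ℝ) (hp : 1 < p) (lam : ℝ) (hlam : 0 < lam)
    (f : ℝ → ℝ) (hf : ContDiffOn ℝ 1 f (Set.Ici 0))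
    (hf0 : f 0 = 0)
    (hc : ∃ c₀ > (0:ℝ), ∃ s₀ > (0:ℝ), ∀ s ∈ Set.Ioo (0:ℝ) s₀, -f s < c₀ * s ^ (p - 1))
    (u : ℝ → ℝ) (hu : Sol1D p lam f u) :
    du u 1 < 0 := by
  obtain ⟨c₀, hc₀, s₀, hs₀, hcs⟩ := hc
  have hI : ((-1:ℝ)) < 1 := by norm_num
  have hudiff : DifferentiableOn ℝ u (Icc (-1:ℝ) 1) := hu.reg.differentiableOn one_ne_zero
  have hucont : ContinuousOn u (Icc (-1:ℝ) 1) := hu.reg.continuousOn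
  have hvcont : ContinuousOn (du u) (Icc (-1:ℝ) 1) :=
    hu.reg.continuousOn_derivWithin (uniqueDiffOn_Icc hI) le_rfl
  have hunn : ∀ x ∈ Icc (-1:ℝ) 1, 0 ≤ u x := by
    intro x hx
    rcases eq_or_lt_of_le hx.1 with h1 | h1
    · rw [← h1, hu.bcm]
    rcases eq_or_lt_of_le hx.2 with h2 | h2
    · rw [h2, hu.bc1]
    · exact (hu.pos x ⟨h1, h2⟩).le
  -- derivative of u at interior points
  have hdiff : ∀ x ∈ Ioo (-1:ℝ) 1, HasDerivAt u (du u x) x := by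
    intro x hx
    exact ((hudiff x (Ioo_subset_Icc_self hx)).hasDerivWithinAt).hasDerivAt
      (Icc_mem_nhds hx.1 hx.2)
  -- Step A : du u 1 ≤ 0
  have hle : du u 1 ≤ 0 := by
    have hd : HasDerivWithinAt u (du u 1) (Icc (-1:ℝ) 1) 1 :=
      (hudiff 1 (right_mem_Icc.mpr hI.le)).hasDerivWithinAt
    rw [hasDerivWithinAt_iff_tendsto_slope] at hd
    have hne : (𝓝[Icc (-1:ℝ) 1 \ {1}] 1).NeBot := by
      apply mem_closure_iff_nhdsWithin_neBot.mp
      have hsub : Ioo (-1:ℝ) 1 ⊆ Icc (-1:ℝ) 1 \ {1} := by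
        intro y hy; exact ⟨Ioo_subset_Icc_self hy, fun h => absurd (h ▸ hy.2) (lt_irrefl 1)⟩
      have : (1:ℝ) ∈ closure (Ioo (-1:ℝ) 1) := by
        rw [closure_Ioo (by norm_num : (-1:ℝ) ≠ 1)]
        exact right_mem_Icc.mpr hI.le
      exact closure_mono hsub this
    refine le_of_tendsto hd ?_
    filter_upwards [self_mem_nhdsWithin] with x hx
    have hx1 : x < 1 := lt_of_le_of_ne (hx.1.2) (fun h => hx.2 (by simp [h]))
    rw [slope_def_field, hu.bc1, sub_zero]
    apply div_nonpos_of_nonneg_of_nonpos (hunn x hx.1)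
    linarith
  rcases lt_or_eq_of_le hle with h | h0
  · exact h
  exfalso
  -- now du u 1 = 0 (h0 : du u 1 = 0)
  set q : ℝ := p / (p - 1) with hqdef
  have hq : 1 < q := by
    rw [hqdef, lt_div_iff₀ (by linarith)]
    linarith
  -- derivative of Φ
  have hΦderiv : ∀ x ∈ Ioo (-1:ℝ) 1, HasDerivAt (fun y => phi p (du u y))
      (-(lam * f (u x))) x := by
    intro x hx
    have hd := ((hu.reg'.differentiableOn one_ne_zero x hx).differentiableAt
      (isOpen_Ioo.mem_nhds hx)).hasDerivAt
    have he : deriv (fun y => phi p (du u y)) x = -(lam * f (u x)) := by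
      have := hu.ode x hx; linarith
    rwa [he] at hd
  -- F and its derivative
  set F : ℝ → ℝ := fun s => ∫ t in (0:ℝ)..s, f t with hFdef
  have hfc : ContinuousOn f (Ici (0:ℝ)) := hf.continuousOn
  have hFderiv : ∀ s : ℝ, 0 < s → HasDerivAt F (f s) s := by
    intro s hs
    have hint : IntervalIntegrable f MeasureTheory.volume 0 s := by
      apply ContinuousOn.intervalIntegrable
      apply hfc.mono
      rw [uIcc_of_le hs.le]
      exact Icc_subset_Ici_self
    have hmeas : StronglyMeasurableAtFilter f (𝓝 s) MeasureTheory.volume :=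
      (hfc.mono (Ioi_subset_Ici le_rfl)).stronglyMeasurableAtFilter isOpen_Ioi _ hs
    exact intervalIntegral.integral_hasDerivAt_right hint hmeas
      ((hfc.continuousAt (Ici_mem_nhds hs)))
  -- energy function
  set E : ℝ → ℝ := fun x => (p-1)/p * |phi p (du u x)| ^ q + lam * F (u x) with hEdef
  have hE' : ∀ x ∈ Ioo (-1:ℝ) 1, HasDerivAt E 0 x := by
    intro x hx
    have h1 : HasDerivAt (fun y => |phi p (du u y)| ^ q)
        ((q * |phi p (du u x)| ^ (q - 2) * phi p (du u x)) * (-(lam * f (u x)))) x :=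
      by have := (hasDerivAt_abs_rpow (phi p (du u x)) hq).comp x (hΦderiv x hx); exact this
    have h2 : HasDerivAt (fun y => F (u y)) (f (u x) * du u x) x :=
      (hFderiv (u x) (hu.pos x hx)).comp x (hdiff x hx)
    have h3 := (h1.const_mul ((p-1)/p)).add (h2.const_mul lam)
    have key : q * |phi p (du u x)| ^ (q - 2) * phi p (du u x) = q * du u x := by
      rw [mul_assoc, phi_inv hp]
    rw [key] at h3
    have hpq : (p-1)/p * q = 1 := by
      rw [hqdef]; field_simp
      exact div_self (by linarith)
    refine h3.congr_deriv ?_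
    have : (p-1)/p * (q * du u x * -(lam * f (u x))) =
        ((p-1)/p * q) * (du u x * -(lam * f (u x))) := by ring
    rw [this, hpq]
    ring
  -- continuity of E on Icc
  obtain ⟨xm, hxm, hmax⟩ := (isCompact_Icc).exists_isMaxOn (nonempty_Icc.mpr hI.le) hucont
  set M := u xm with hMdef
  have hM0 : 0 ≤ M := hunn xm hxm
  have hFcont : ContinuousOn F (Icc 0 M) := by
    have hint : MeasureTheory.IntegrableOn f (uIcc 0 M) := by
      rw [uIcc_of_le hM0]
      exact (hfc.mono Icc_subset_Ici_self).integrableOn_compact isCompact_Icc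
    have := intervalIntegral.continuousOn_primitive_interval hint
    rwa [uIcc_of_le hM0] at this
  have hEcont : ContinuousOn E (Icc (-1:ℝ) 1) := by
    apply ContinuousOn.add
    · exact continuousOn_const.mul
        (((continuous_abs_rpow (by linarith : (0:ℝ) ≤ q)).comp
          (continuous_phi hp)).comp_continuousOn hvcont)
    · exact continuousOn_const.mul
        (hFcont.comp hucont (fun x hx => ⟨hunn x hx, hmax hx⟩))
  -- E 1 = 0
  have hΦ1 : phi p (du u 1) = 0 := by
    rw [h0]; simp [phi]
  have hE1 : E 1 = 0 := by
    rw [hEdef]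
    simp only [hΦ1, abs_zero]
    rw [Real.zero_rpow (by linarith : q ≠ 0), hu.bc1, hFdef]
    simp [intervalIntegral.integral_same]
  -- E vanishes on Ioo
  have hEzero : ∀ x ∈ Ioo (-1:ℝ) 1, E x = 0 := by
    intro x hx
    have hcont : ContinuousOn E (Icc x 1) :=
      hEcont.mono (Icc_subset_Icc hx.1.le le_rfl)
    have hderiv : ∀ y ∈ Ico x 1, HasDerivWithinAt E 0 (Ici y) y := by
      intro y hy
      exact (hE' y ⟨lt_of_lt_of_le hx.1 hy.1, hy.2⟩).hasDerivWithinAt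
    have := constant_of_has_deriv_right_zero hcont hderiv 1 (right_mem_Icc.mpr hx.2.le)
    rw [hE1] at this
    exact this.symm
  -- choose x₀ close to 1
  have hu1 : Tendsto u (𝓝[Icc (-1:ℝ) 1] 1) (𝓝 0) := by
    have := (hucont 1 (right_mem_Icc.mpr hI.le)).tendsto
    rwa [hu.bc1] at this
  have hev : ∀ᶠ x in 𝓝[Icc (-1:ℝ) 1] 1, u x < s₀ := hu1.eventually_lt_const hs₀
  have hev' : {x | u x < s₀} ∈ 𝓝[Icc (-1:ℝ) 1] 1 := hev
  rw [Metric.mem_nhdsWithin_iff] at hev'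
  obtain ⟨ε, hε, hball⟩ := hev'
  set x₀ : ℝ := max (1 - ε/2) 0 with hx₀def
  have hx₀0 : 0 ≤ x₀ := le_max_right _ _
  have hx₀mem : x₀ ∈ Ioo (-1:ℝ) 1 := by
    constructor
    · linarith
    · apply max_lt (by linarith) (by norm_num)
  have hsmall : ∀ x ∈ Ico x₀ 1, u x < s₀ := by
    intro x hx
    have h1 : 1 - ε/2 ≤ x₀ := le_max_left _ _
    have hxI : x ∈ Icc (-1:ℝ) 1 := ⟨by linarith [hx.1, hx₀0], hx.2.le⟩
    have : x ∈ Metric.ball (1:ℝ) ε := by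
      rw [Metric.mem_ball, Real.dist_eq, abs_of_nonpos (by linarith [hx.2] : x - 1 ≤ 0)]
      have := hx.1
      linarith
    exact hball ⟨this, hxI⟩
  -- the constant K
  have hA : (0:ℝ) < lam * c₀ / (p - 1) := by
    apply div_pos (mul_pos hlam hc₀) (by linarith)
  set K : ℝ := (lam * c₀ / (p - 1)) ^ (1/p : ℝ) with hKdef
  have hKpos : 0 < K := Real.rpow_pos_of_pos hA _
  have hKp : K ^ p = lam * c₀ / (p - 1) := by
    rw [hKdef, one_div, Real.rpow_inv_rpow hA.le (by linarith : p ≠ 0)]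
  -- gradient bound near 1
  have hbound : ∀ x ∈ Ioo x₀ 1, |du u x| ≤ K * u x := by
    intro x hx
    have hxI : x ∈ Ioo (-1:ℝ) 1 := ⟨lt_trans hx₀mem.1 hx.1, hx.2⟩
    have hux : u x ∈ Ioo (0:ℝ) s₀ := ⟨hu.pos x hxI, hsmall x ⟨hx.1.le, hx.2⟩⟩
    -- bound -F (u x)
    have hFb : -F (u x) ≤ c₀ * (u x) ^ p / p := by
      have hs : 0 < u x := hux.1
      have hint1 : IntervalIntegrable (fun t => -f t) volume 0 (u x) := by
        apply ContinuousOn.intervalIntegrable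
        apply ContinuousOn.neg
        apply hfc.mono
        rw [uIcc_of_le hs.le]
        exact Icc_subset_Ici_self
      have hint2 : IntervalIntegrable (fun t => c₀ * t ^ (p-1)) volume 0 (u x) :=
        (intervalIntegral.intervalIntegrable_rpow (Or.inl (by linarith))).const_mul c₀
      have hpt : ∀ t ∈ Icc (0:ℝ) (u x), -f t ≤ c₀ * t ^ (p-1) := by
        intro t ht
        rcases eq_or_lt_of_le ht.1 with h1 | h1
        · rw [← h1, hf0]
          simp [Real.zero_rpow (by linarith : p - 1 ≠ 0)]
        · exact (hcs t ⟨h1, lt_of_le_of_lt ht.2 hux.2⟩).le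
      have hmono := intervalIntegral.integral_mono_on hs.le hint1 hint2 hpt
      rw [intervalIntegral.integral_neg, intervalIntegral.integral_const_mul,
        integral_rpow (Or.inl (by linarith : (-1:ℝ) < p - 1))] at hmono
      rw [sub_add_cancel, Real.zero_rpow (by linarith : p ≠ 0), sub_zero] at hmono
      calc -F (u x) ≤ c₀ * (u x ^ p / p) := hmono
        _ = c₀ * u x ^ p / p := by ring
    -- from the energy identity
    have hEx := hEzero x hxI
    have hq' : |phi p (du u x)| ^ q = |du u x| ^ p := by
      rw [hqdef]; exact abs_phi_rpow hp _
    rw [hEdef] at hEx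
    simp only [hq'] at hEx
    have h5 : (p-1)/p * |du u x| ^ p ≤ lam * (c₀ * u x ^ p / p) := by
      have h51 : (p-1)/p * |du u x| ^ p = lam * (-F (u x)) := by linarith [hEx]
      rw [h51]
      exact mul_le_mul_of_nonneg_left hFb hlam.le
    have h6 : |du u x| ^ p ≤ (K * u x) ^ p := by
      rw [Real.mul_rpow hKpos.le (hux.1.le), hKp]
      have hp0 : (0:ℝ) < p := by linarith
      have h5p := mul_le_mul_of_nonneg_left h5 hp0.le
      rw [div_mul_eq_mul_div, le_div_iff₀ (by linarith : (0:ℝ) < p - 1)]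
      have e1 : p * ((p-1)/p * |du u x| ^ p) = (p - 1) * |du u x| ^ p := by
        field_simp
      have e2 : p * (lam * (c₀ * u x ^ p / p)) = lam * c₀ * u x ^ p := by
        field_simp
        try ring
      rw [e1, e2] at h5p
      nlinarith [h5p]
    exact (Real.rpow_le_rpow_iff (abs_nonneg _) (mul_pos hKpos hux.1).le (by linarith)).mp h6
  -- the auxiliary monotone function
  set g : ℝ → ℝ := fun x => Real.exp (K * x) * u x with hgdef
  have hg' : ∀ x ∈ Ioo x₀ 1, HasDerivAt g
      (Real.exp (K * x) * K * u x + Real.exp (K * x) * du u x) x := by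
    intro x hx
    have hxI : x ∈ Ioo (-1:ℝ) 1 := ⟨lt_trans hx₀mem.1 hx.1, hx.2⟩
    have h1 : HasDerivAt (fun y : ℝ => K * y) K x := by
      simpa using (hasDerivAt_id x).const_mul K
    have h2 : HasDerivAt (fun y : ℝ => Real.exp (K * y)) (Real.exp (K * x) * K) x :=
      (Real.hasDerivAt_exp (K * x)).comp x h1
    exact h2.mul (hdiff x hxI)
  have hgmono : MonotoneOn g (Icc x₀ 1) := by
    apply monotoneOn_of_deriv_nonneg (convex_Icc x₀ 1)
    · exact ((Real.continuous_exp.comp (continuous_const.mul continuous_id)).continuousOn).mul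
        (hucont.mono (Icc_subset_Icc (by linarith [hx₀mem.1]) le_rfl))
    · rw [interior_Icc]
      intro x hx
      exact ((hg' x hx).differentiableAt).differentiableWithinAt
    · rw [interior_Icc]
      intro x hx
      rw [(hg' x hx).deriv]
      have hxI : x ∈ Ioo (-1:ℝ) 1 := ⟨lt_trans hx₀mem.1 hx.1, hx.2⟩
      have hb := hbound x hx
      have hab := neg_abs_le (du u x)
      nlinarith [Real.exp_pos (K * x)]
  have hcontr := hgmono (left_mem_Icc.mpr hx₀mem.2.le) (right_mem_Icc.mpr hx₀mem.2.le)
    hx₀mem.2.le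
  have hg1 : g 1 = 0 := by simp [hgdef, hu.bc1]
  have hgx₀ : 0 < g x₀ := mul_pos (Real.exp_pos _) (hu.pos x₀ hx₀mem)
  rw [hg1] at hcontr
  linarith
end

section
/- Assume f \in C^1([0,\infty)). Let u be a positive solution of the one-dimensional problem (1) and let w be a solution of the linearized problem (4). Then the function x \mapsto (\varphi_p(u'))'(x)\,w(x) - \varphi_p'(u'(x))\,u'(x)\,w'(x) is constant on [-1,1]. -/
open Set

open Filter Topology

section Helpers
lemma abs_phi (p : ℝ) (hp : 1 < p) (t : ℝ) : |phi p t| = |t| ^ (p - 1) := by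
  rcases eq_or_ne t 0 with rfl | ht
  · simp [phi, Real.zero_rpow (by linarith : p - 1 ≠ 0)]
  · have h0 : (0:ℝ) < |t| := abs_pos.2 ht
    rw [phi, abs_mul, abs_of_nonneg (Real.rpow_nonneg (abs_nonneg t) _)]
    rw [show p - 1 = 1 + (p - 2) by ring, Real.rpow_add h0, Real.rpow_one]

lemma phi_eq_zero_iff (p : ℝ) (hp : 1 < p) (t : ℝ) : phi p t = 0 ↔ t = 0 := by
  constructor
  · intro h
    by_contra ht
    have h0 : (0:ℝ) < |t| := abs_pos.2 ht
    have := abs_phi p hp t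
    rw [h, abs_zero] at this
    exact absurd this.symm (ne_of_gt (Real.rpow_pos_of_pos h0 _))
  · rintro rfl; simp [phi]

lemma phi_inv (p : ℝ) (hp : 1 < p) (t : ℝ) : phi (p / (p-1)) (phi p t) = t := by
  rcases eq_or_ne t 0 with rfl | ht
  · simp [phi]
  · have h0 : (0:ℝ) < |t| := abs_pos.2 ht
    have hp1 : p - 1 ≠ 0 := by linarith
    rw [phi, abs_phi p hp t, ← Real.rpow_mul (abs_nonneg t)]
    unfold phi
    rw [mul_assoc, ← Real.rpow_add h0,
      show p - 2 + (p - 1) * (p / (p - 1) - 2) = 0 by field_simp; ring,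
      Real.rpow_zero, mul_one]

lemma phi_deriv_inv (p : ℝ) (hp : 1 < p) (t : ℝ) (ht : t ≠ 0) :
    phi' (p / (p-1)) (phi p t) * phi' p t = 1 := by
  have h0 : (0:ℝ) < |t| := abs_pos.2 ht
  have hp1 : p - 1 ≠ 0 := by linarith
  rw [phi', phi', abs_phi p hp t, ← Real.rpow_mul (abs_nonneg t)]
  have hAB : |t| ^ ((p - 1) * (p / (p - 1) - 2)) * |t| ^ (p - 2) = 1 := by
    rw [← Real.rpow_add h0, show (p - 1) * (p / (p - 1) - 2) + (p - 2) = 0 by field_simp; ring,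
      Real.rpow_zero]
  have hc : (p / (p - 1) - 1) * (p - 1) = 1 := by field_simp; ring
  linear_combination ((p / (p - 1) - 1) * (p - 1)) * hAB + hc

lemma continuous_phi (p : ℝ) (hp : 1 < p) : Continuous (phi p) := by
  rw [continuous_iff_continuousAt]
  intro t
  rcases eq_or_ne t 0 with rfl | ht
  · have hb : Tendsto (fun s : ℝ => |s| ^ (p - 1)) (nhds 0) (nhds 0) := by
      have h1 : ContinuousAt (fun y : ℝ => y ^ (p - 1)) |0| := by
        simpa using Real.continuousAt_rpow_const 0 (p - 1) (Or.inr (by linarith))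
      have h2 := h1.comp (continuous_abs.continuousAt (x := (0:ℝ)))
      have h3 : Tendsto (fun s : ℝ => |s| ^ (p - 1)) (nhds 0) (nhds (|(0:ℝ)| ^ (p - 1))) := h2
      simpa [Real.zero_rpow (by linarith : p - 1 ≠ 0)] using h3
    have : Tendsto (phi p) (nhds 0) (nhds 0) :=
      squeeze_zero_norm (fun s => by rw [Real.norm_eq_abs, abs_phi p hp s]) hb
    simpa [ContinuousAt, phi] using this
  · have h1 : ContinuousAt (fun y : ℝ => y ^ (p - 2)) |t| :=
      Real.continuousAt_rpow_const _ _ (Or.inl (abs_ne_zero.2 ht))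
    exact continuousAt_id.mul (h1.comp continuous_abs.continuousAt)

lemma hasDerivAt_phi (q : ℝ) (s : ℝ) (hs : s ≠ 0) : HasDerivAt (phi q) (phi' q s) s := by
  rcases hs.lt_or_gt with hneg | hpos
  · have hev : (fun t : ℝ => -((-t) ^ (q - 1))) =ᶠ[nhds s] phi q := by
      filter_upwards [Iio_mem_nhds hneg] with t ht
      have ht' : (0:ℝ) < -t := by simpa using ht
      rw [phi, abs_of_neg (by simpa using ht)]
      rw [show q - 1 = 1 + (q - 2) by ring, Real.rpow_add ht', Real.rpow_one]
      ring
    have hinner : HasDerivAt (fun t : ℝ => -t) (-1) s := (hasDerivAt_id s).neg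
    have houter : HasDerivAt (fun y : ℝ => y ^ (q - 1)) ((q - 1) * (-s) ^ (q - 1 - 1)) (-s) :=
      Real.hasDerivAt_rpow_const (Or.inl (by linarith))
    have hcomp := (houter.comp s hinner).neg
    have h2 : HasDerivAt (fun t : ℝ => -((-t) ^ (q - 1))) ((q - 1) * (-s) ^ (q - 2)) s := by
      exact hcomp.congr_deriv (by ring_nf)
    have h3 : HasDerivAt (phi q) ((q - 1) * (-s) ^ (q - 2)) s := h2.congr_of_eventuallyEq hev.symm
    convert h3 using 1
    rw [phi', abs_of_neg hneg]
  · have hev : (fun t : ℝ => t ^ (q - 1)) =ᶠ[nhds s] phi q := by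
      filter_upwards [Ioi_mem_nhds hpos] with t ht
      have ht' : (0:ℝ) < t := ht
      rw [phi, abs_of_pos ht', show q - 1 = 1 + (q - 2) by ring, Real.rpow_add ht',
        Real.rpow_one]
    have houter : HasDerivAt (fun y : ℝ => y ^ (q - 1)) ((q - 1) * s ^ (q - 1 - 1)) s :=
      Real.hasDerivAt_rpow_const (Or.inl (ne_of_gt hpos))
    have : HasDerivAt (phi q) ((q - 1) * s ^ (q - 1 - 1)) s := houter.congr_of_eventuallyEq hev.symm
    convert this using 1
    rw [phi', abs_of_pos hpos]; ring_nf

lemma hasDerivAt_mul_of_zero {Q R : ℝ → ℝ} {x q : ℝ} (hQ : HasDerivAt Q q x)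
    (hQ0 : Q x = 0) (hR : ContinuousAt R x) :
    HasDerivAt (fun y => Q y * R y) (q * R x) x := by
  rw [hasDerivAt_iff_tendsto_slope] at hQ ⊢
  have hR' : Tendsto R (nhdsWithin x {x}ᶜ) (nhds (R x)) :=
    hR.tendsto.mono_left nhdsWithin_le_nhds
  refine (hQ.mul hR').congr' ?_
  filter_upwards [self_mem_nhdsWithin] with y hy
  have hyx : y - x ≠ 0 := sub_ne_zero.2 hy
  simp only [slope_def_field, hQ0, mul_zero, sub_zero]
  field_simp
  ring
end Helpers

/-- Lemma 3.3: the Wronskian-type quantity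
`(φ_p(u'))' w - φ_p'(u') u' w'` is constant on `[-1,1]`. -/
theorem stmt13 (p : ℝ) (hp : 1 < p) (lam : ℝ) (hlam : 0 < lam)
    (f : ℝ → ℝ) (hf : ContDiffOn ℝ 1 f (Set.Ici 0))
    (u : ℝ → ℝ) (hu : Sol1D p lam f u)
    (w : ℝ → ℝ) (hw : Lin1D p lam f u w) :
    ∀ x ∈ Set.Icc (-1:ℝ) 1, ∀ y ∈ Set.Icc (-1:ℝ) 1,
      derivWithin (fun z => phi p (du u z)) (Set.Icc (-1) 1) x * w x
          - phi' p (du u x) * du u x * du w x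
        = derivWithin (fun z => phi p (du u z)) (Set.Icc (-1) 1) y * w y
          - phi' p (du u y) * du u y * du w y := by
  have hI : UniqueDiffOn ℝ (Icc (-1:ℝ) 1) := uniqueDiffOn_Icc (by norm_num)
  have hp1 : (0:ℝ) < p - 1 := by linarith
  -- the continuous representative
  set G : ℝ → ℝ := fun x => -(lam * f (u x) * w x) - (p - 1) * phi p (du u x) * du w x
    with hGdef
  -- basic facts
  have hu0 : ∀ x ∈ Icc (-1:ℝ) 1, 0 ≤ u x := by
    intro x hx
    rcases eq_or_lt_of_le hx.1 with h | h
    · simp [← h, hu.bcm]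
    · rcases eq_or_lt_of_le hx.2 with h2 | h2
      · simp [h2, hu.bc1]
      · exact (hu.pos x ⟨h, h2⟩).le
  have hcu' : ContinuousOn (du u) (Icc (-1:ℝ) 1) :=
    hu.reg.continuousOn_derivWithin hI le_rfl
  have hcw' : ContinuousOn (du w) (Icc (-1:ℝ) 1) :=
    hw.reg.continuousOn_derivWithin hI le_rfl
  have hGcont : ContinuousOn G (Icc (-1:ℝ) 1) := by
    apply ContinuousOn.sub
    · apply ContinuousOn.neg
      exact (continuousOn_const.mul
        (hf.continuousOn.comp hu.reg.continuousOn hu0)).mul hw.reg.continuousOn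
    · exact (continuousOn_const.mul
        ((continuous_phi p hp).comp_continuousOn hcu')).mul hcw'
  have hud : ∀ x ∈ Ioo (-1:ℝ) 1, HasDerivAt u (du u x) x := fun x hx =>
    ((hu.reg.differentiableOn one_ne_zero) x (Ioo_subset_Icc_self hx)).hasDerivWithinAt.hasDerivAt
      (Icc_mem_nhds hx.1 hx.2)
  have hwd : ∀ x ∈ Ioo (-1:ℝ) 1, HasDerivAt w (du w x) x := fun x hx =>
    ((hw.reg.differentiableOn one_ne_zero) x (Ioo_subset_Icc_self hx)).hasDerivWithinAt.hasDerivAt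
      (Icc_mem_nhds hx.1 hx.2)
  have hPd : ∀ x ∈ Ioo (-1:ℝ) 1,
      HasDerivAt (fun y => phi p (du u y)) (-(lam * f (u x))) x := by
    intro x hx
    have hdiff : DifferentiableAt ℝ (fun y => phi p (du u y)) x :=
      (hu.reg'.differentiableOn one_ne_zero x hx).differentiableAt (isOpen_Ioo.mem_nhds hx)
    have h := hdiff.hasDerivAt
    have hval : deriv (fun y => phi p (du u y)) x = -(lam * f (u x)) := by
      have := hu.ode x hx; linarith
    rwa [hval] at h
  have hQd : ∀ x ∈ Ioo (-1:ℝ) 1,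
      HasDerivAt (fun y => phi' p (du u y) * du w y) (-(lam * deriv f (u x) * w x)) x := by
    intro x hx
    have hdiff : DifferentiableAt ℝ (fun y => phi' p (du u y) * du w y) x :=
      (hw.reg'.differentiableOn one_ne_zero x hx).differentiableAt (isOpen_Ioo.mem_nhds hx)
    have h := hdiff.hasDerivAt
    have hval : deriv (fun y => phi' p (du u y) * du w y) x
        = -(lam * deriv f (u x) * w x) := by
      have := hw.ode x hx; linarith
    rwa [hval] at h
  have hFwd : ∀ x ∈ Ioo (-1:ℝ) 1,
      HasDerivAt (fun y => lam * f (u y) * w y)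
        (lam * (deriv f (u x) * du u x) * w x + lam * f (u x) * du w x) x := by
    intro x hx
    have hfd : DifferentiableAt ℝ f (u x) :=
      (hf.differentiableOn one_ne_zero).differentiableAt (Ici_mem_nhds (hu.pos x hx))
    have hF : HasDerivAt (fun y => f (u y)) (deriv f (u x) * du u x) x :=
      (hfd.hasDerivAt).comp x (hud x hx)
    exact (hF.const_mul lam).mul (hwd x hx)
  -- main case: points where u' ≠ 0
  have hmain : ∀ x ∈ Ioo (-1:ℝ) 1, du u x ≠ 0 → HasDerivAt G 0 x := by
    intro x hx h0
    have hPx0 : phi p (du u x) ≠ 0 := fun h => h0 ((phi_eq_zero_iff p hp _).1 h)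
    have hGeq : G = fun y => -(lam * f (u y) * w y)
        - phi' p (du u y) * du w y * phi (p / (p-1)) (phi p (du u y)) := by
      funext y
      rw [hGdef]
      simp only [phi_inv p hp]
      unfold phi phi'
      ring
    rw [hGeq]
    have h2 : HasDerivAt (fun y => phi (p / (p-1)) (phi p (du u y)))
        (phi' (p / (p-1)) (phi p (du u x)) * -(lam * f (u x))) x :=
      by have := (hasDerivAt_phi (p / (p-1)) _ hPx0).comp x (hPd x hx); exact this
    have h3 := (hQd x hx).mul h2
    have htot := ((hFwd x hx).neg).sub h3
    refine htot.congr_deriv (Eq.symm ?_)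
    have hqinv := phi_inv p hp (du u x)
    have hdinv := phi_deriv_inv p hp (du u x) h0
    linear_combination (-(lam * deriv f (u x) * w x)) * hqinv
      + (-(lam * f (u x) * du w x)) * hdinv
  -- all interior points
  have hall : ∀ x ∈ Ioo (-1:ℝ) 1, HasDerivAt G 0 x := by
    intro x hx
    by_cases h0 : du u x ≠ 0
    · exact hmain x hx h0
    push_neg at h0
    by_cases hp2 : p = 2
    · subst hp2
      have hPu : (fun y => phi 2 (du u y)) = du u := by
        funext y; simp [phi, sub_self]
      have hud2 : HasDerivAt (du u) (-(lam * f (u x))) x := hPu ▸ hPd x hx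
      have hGeq : G = fun y => -(lam * f (u y) * w y)
          - phi' 2 (du u y) * du w y * du u y := by
        funext y
        rw [hGdef]
        unfold phi phi'
        simp only [show (2:ℝ) - 2 = 0 by norm_num, Real.rpow_zero]
        ring
      rw [hGeq]
      have h3 := (hQd x hx).mul hud2
      have htot := ((hFwd x hx).neg).sub h3
      refine htot.congr_deriv ?_
      rw [h0]
      unfold phi'
      simp [Real.rpow_zero]
      ring
    · -- p ≠ 2, u'(x) = 0
      have hQx0 : phi' p (du u x) * du w x = 0 := by
        rw [h0]
        unfold phi'
        rw [abs_zero, Real.zero_rpow (by intro h; apply hp2; linarith [sub_eq_zero.mp h])]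
        ring
      by_cases hff : f (u x) = 0
      · -- type 2 point
        have hGeq : G = fun y => -(lam * f (u y) * w y)
            - phi' p (du u y) * du w y * du u y := by
          funext y
          rw [hGdef]
          unfold phi phi'
          ring
        rw [hGeq]
        have hcu : ContinuousAt (du u) x :=
          (hcu'.continuousAt (Icc_mem_nhds hx.1 hx.2))
        have h3 : HasDerivAt (fun y => (phi' p (du u y) * du w y) * du u y)
            ((-(lam * deriv f (u x) * w x)) * du u x) x :=
          hasDerivAt_mul_of_zero (hQd x hx) hQx0 hcu
        have htot := ((hFwd x hx).neg).sub h3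
        refine htot.congr_deriv ?_
        rw [h0, hff]
        ring
      · -- bad point: P has nonzero derivative, isolated zero; local constancy
        have hPx : phi p (du u x) = 0 := by rw [h0]; simp [phi]
        have hslope := hasDerivAt_iff_tendsto_slope.mp (hPd x hx)
        have hne0 : -(lam * f (u x)) ≠ 0 := by
          intro h; apply hff
          have := neg_eq_zero.mp h
          rcases mul_eq_zero.mp this with h' | h'
          · exact absurd h' (ne_of_gt hlam)
          · exact h'
        have hev : ∀ᶠ y in 𝓝[≠] x, phi p (du u y) ≠ 0 ∧ y ∈ Ioo (-1:ℝ) 1 := by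
          have h1 : ∀ᶠ y in 𝓝[≠] x, slope (fun z => phi p (du u z)) x y ≠ 0 :=
            hslope.eventually_ne hne0
          have h2 : ∀ᶠ y in 𝓝[≠] x, y ∈ Ioo (-1:ℝ) 1 :=
            eventually_nhdsWithin_of_eventually_nhds
              (eventually_mem_set.2 (isOpen_Ioo.mem_nhds hx))
          filter_upwards [h1, h2, self_mem_nhdsWithin] with y hy1 hy2 hy3
          refine ⟨fun hzero => hy1 ?_, hy2⟩
          rw [slope_def_field, hzero, hPx, sub_zero, zero_div]
        rw [Filter.eventually_iff, Metric.mem_nhdsWithin_iff] at hev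
        obtain ⟨ε, hε, hball⟩ := hev
        set δ := ε / 2 with hδ
        have hδ0 : 0 < δ := by positivity
        have hgood : ∀ y, y ∈ Icc (x - δ) (x + δ) → y ≠ x → HasDerivAt G 0 y := by
          intro y hy hyx
          have hmem : y ∈ Metric.ball x ε ∩ {x}ᶜ := by
            constructor
            · rw [Metric.mem_ball, Real.dist_eq, abs_sub_lt_iff]
              constructor <;> [linarith [hy.2]; linarith [hy.1]]
            · exact hyx
          have := hball hmem
          exact hmain y this.2 (fun h => this.1 (by rw [h]; simp [phi]))
        have hsub : Icc (x - δ) (x + δ) ⊆ Icc (-1:ℝ) 1 := by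
          intro y hy
          rcases eq_or_ne y x with rfl | hyx
          · exact Ioo_subset_Icc_self hx
          · exact Ioo_subset_Icc_self (hball ⟨by
              rw [Metric.mem_ball, Real.dist_eq, abs_sub_lt_iff]
              constructor <;> [linarith [hy.2]; linarith [hy.1]], hyx⟩).2
        have hleft : ∀ y ∈ Icc (x - δ) x, G y = G (x - δ) := by
          apply constant_of_has_deriv_right_zero
          · exact hGcont.mono (fun y hy => hsub ⟨hy.1, by linarith [hy.2]⟩)
          · intro y hy
            exact (hgood y ⟨hy.1, by linarith [hy.2]⟩ (ne_of_lt hy.2)).hasDerivWithinAt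
        have hright : ∀ z ∈ Icc (-(x + δ)) (-x), G (-z) = G (-(-(x + δ))) := by
          apply constant_of_has_deriv_right_zero
          · apply (hGcont.mono hsub).comp continuous_neg.continuousOn
            intro z hz
            show -z ∈ Icc (x - δ) (x + δ)
            constructor
            · linarith [hz.2]
            · linarith [hz.1]
          · intro z hz
            have hzx : -z ≠ x := by
              intro h
              have hzz : z = -x := by linarith
              rw [hzz] at hz
              exact lt_irrefl _ hz.2
            have hzm : -z ∈ Icc (x - δ) (x + δ) := by
              constructor
              · linarith [hz.2]
              · linarith [hz.1]
            have hG' := (hgood (-z) hzm hzx).comp z (hasDerivAt_neg z)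
            have hG2 := hG'.hasDerivWithinAt (s := Ici z)
            simp at hG2
            exact hG2
        have hconst : ∀ y ∈ Icc (x - δ) (x + δ), G y = G x := by
          intro y hy
          rcases le_total y x with h | h
          · rw [hleft y ⟨hy.1, h⟩, ← hleft x ⟨by linarith, le_refl x⟩]
          · have h1 := hright (-y) ⟨by linarith [hy.2], by linarith⟩
            have h2 := hright (-x) ⟨by linarith, le_refl _⟩
            simp only [neg_neg] at h1 h2
            rw [h1, ← h2]
        have heq : G =ᶠ[𝓝 x] fun _ => G x :=
          eventually_of_mem (Icc_mem_nhds (by linarith) (by linarith)) hconst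
        exact (heq.hasDerivAt_iff).2 (hasDerivAt_const x (G x))
  -- G constant on Ioo
  have h0mem : (0:ℝ) ∈ Ioo (-1:ℝ) 1 := by constructor <;> norm_num
  have hIoo : ∀ x ∈ Ioo (-1:ℝ) 1, G x = G 0 := by
    intro x hx
    rcases le_total x 0 with h | h
    · have := constant_of_has_deriv_right_zero
        (hGcont.mono (Icc_subset_Icc (le_of_lt hx.1) (by norm_num)))
        (fun y hy => (hall y ⟨lt_of_lt_of_le hx.1 hy.1, lt_of_lt_of_le hy.2 (by norm_num : (0:ℝ) ≤ 1)⟩).hasDerivWithinAt)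
        0 ⟨h, le_refl 0⟩
      exact this.symm
    · exact constant_of_has_deriv_right_zero
        (hGcont.mono (Icc_subset_Icc (by norm_num) (le_of_lt hx.2)))
        (fun y hy => (hall y ⟨lt_of_lt_of_le (by norm_num : (-1:ℝ) < 0) hy.1, lt_trans hy.2 hx.2⟩).hasDerivWithinAt)
        x ⟨h, le_refl x⟩
  -- extend to endpoints by continuity
  have hlim : ∀ x ∈ Icc (-1:ℝ) 1, G x = G 0 := by
    intro x hx
    by_cases hxI : x ∈ Ioo (-1:ℝ) 1
    · exact hIoo x hxI
    · have hcl : x ∈ closure (Ioo (-1:ℝ) 1) := by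
        rw [closure_Ioo (by norm_num : (-1:ℝ) ≠ 1)]; exact hx
      have hnb : (𝓝[Ioo (-1:ℝ) 1] x).NeBot := mem_closure_iff_nhdsWithin_neBot.mp hcl
      have ht1 : Tendsto G (𝓝[Ioo (-1:ℝ) 1] x) (𝓝 (G x)) :=
        (hGcont x hx).mono Ioo_subset_Icc_self
      have ht2 : Tendsto G (𝓝[Ioo (-1:ℝ) 1] x) (𝓝 (G 0)) := by
        refine Tendsto.congr' ?_ tendsto_const_nhds
        filter_upwards [self_mem_nhdsWithin] with y hy
        exact (hIoo y hy).symm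
      exact tendsto_nhds_unique ht1 ht2
  -- identify G with the claimed expression
  have hTG : ∀ x ∈ Icc (-1:ℝ) 1,
      derivWithin (fun z => phi p (du u z)) (Icc (-1) 1) x * w x
        - phi' p (du u x) * du u x * du w x = G x := by
    intro x hx
    by_cases hxI : x ∈ Ioo (-1:ℝ) 1
    · have hdw : derivWithin (fun z => phi p (du u z)) (Icc (-1:ℝ) 1) x
          = deriv (fun z => phi p (du u z)) x :=
        derivWithin_of_mem_nhds (Icc_mem_nhds hxI.1 hxI.2)
      have hval : deriv (fun z => phi p (du u z)) x = -(lam * f (u x)) := by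
        have := hu.ode x hxI; linarith
      rw [hdw, hval, hGdef]
      unfold phi phi'
      ring
    · have hwx : w x = 0 := by
        rcases eq_or_lt_of_le hx.1 with h | h
        · rw [← h]; exact hw.bcm
        · rcases eq_or_lt_of_le hx.2 with h2 | h2
          · rw [h2]; exact hw.bc1
          · exact absurd ⟨h, h2⟩ hxI
      simp only [hGdef]
      rw [hwx]
      unfold phi phi'
      ring
  intro x hx y hy
  rw [hTG x hx, hTG y hy, hlim x hx, hlim y hy]
end
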